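/- Completeness of C₁ᴰ with respect to swap Kripke models: for every set of formulas Γ ∪ {φ} ⊆ For(Σ₁ᴰ), if Γ ⊨_{C₁ᴰ} φ then Γ ⊢_{C₁ᴰ} φ. -/
import Mathlib


/-- Formulas over the signature Σ₁ᴰ = {∧, ∨, →, ¬, O}, with countably many
propositional variables. -/
inductive Form : Type
  | var : ℕ → Form
  | and : Form → Form → Form
  | or : Form → Form → Form
  | imp : Form → Form → Form
  | neg : Form → Form
  | obl : Form → Form

namespace Form
/-- α° := ¬(α ∧ ¬α) -/
def cons (α : Form) : Form := (α.and α.neg).neg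
/-- ⊥_α := (α ∧ ¬α) ∧ α° -/
def bot (α : Form) : Form := (α.and α.neg).and α.cons
end Form

/-- Theorems of C₁ᴰ: CPL⁺ axioms, (EM), (cf), (bc)', (ca_#)' for # ∈ {∧,∨,→},
(ca_O)', (O-K), (O-E), with rules Modus Ponens and O-necessitation. -/
inductive ThmC1D : Form → Prop
  | A1 (α β : Form) : ThmC1D (α.imp (β.imp α))
  | A2 (α β γ : Form) : ThmC1D ((α.imp (β.imp γ)).imp ((α.imp β).imp (α.imp γ)))
  | A3 (α β : Form) : ThmC1D (α.imp (β.imp (α.and β)))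
  | A4 (α β : Form) : ThmC1D ((α.and β).imp α)
  | A5 (α β : Form) : ThmC1D ((α.and β).imp β)
  | A6 (α β : Form) : ThmC1D (α.imp (α.or β))
  | A7 (α β : Form) : ThmC1D (β.imp (α.or β))
  | A8 (α β γ : Form) : ThmC1D ((α.imp γ).imp ((β.imp γ).imp ((α.or β).imp γ)))
  | A9 (α β : Form) : ThmC1D (((α.imp β).imp α).imp α)
  | EM (α : Form) : ThmC1D (α.or α.neg)
  | cf (α : Form) : ThmC1D (α.neg.neg.imp α)
  | bc' (α β : Form) : ThmC1D (α.cons.imp (α.imp (α.neg.imp β)))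
  | caAnd' (α β : Form) : ThmC1D ((α.cons.and β.cons).imp (α.and β).cons)
  | caOr' (α β : Form) : ThmC1D ((α.cons.and β.cons).imp (α.or β).cons)
  | caImp' (α β : Form) : ThmC1D ((α.cons.and β.cons).imp (α.imp β).cons)
  | caO' (α : Form) : ThmC1D (α.cons.imp α.obl.cons)
  | OK (α β : Form) : ThmC1D ((α.imp β).obl.imp (α.obl.imp β.obl))
  | OE (α : Form) : ThmC1D (α.bot.obl.imp α.bot)
  | mp {α β : Form} : ThmC1D (α.imp β) → ThmC1D α → ThmC1D β
  | nec {α : Form} : ThmC1D α → ThmC1D α.obl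

/-- conj γ [γ₂,…,γ_k] = γ ∧ γ₂ ∧ … ∧ γ_k -/
def conj (γ : Form) : List Form → Form
  | [] => γ
  | δ :: l => γ.and (conj δ l)

/-- Γ ⊢_{C₁ᴰ} φ iff ⊢ φ or ⊢ (γ₁ ∧ … ∧ γ_k) → φ for some γ₁,…,γ_k ∈ Γ, k ≥ 1. -/
def DerivC1D (Γ : Set Form) (φ : Form) : Prop :=
  ThmC1D φ ∨ ∃ (γ : Form) (l : List Form),
    (∀ δ ∈ γ :: l, δ ∈ Γ) ∧ ThmC1D ((conj γ l).imp φ)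

/-- The three snapshots T = (1,0), t = (1,1), F = (0,1). -/
inductive SV : Type
  | T | t | F
deriving DecidableEq

/-- First coordinate of a snapshot. -/
def SV.p1 : SV → Bool
  | .T => true | .t => true | .F => false

/-- Second coordinate of a snapshot. -/
def SV.p2 : SV → Bool
  | .T => false | .t => true | .F => true

/-- Designated values: D = {T, t}, i.e. first coordinate is 1. -/
def SV.desig (a : SV) : Prop := a.p1 = true

/-- The Boolean (classical) snapshots {T, F}. -/
def SV.boo (a : SV) : Prop := a = SV.T ∨ a = SV.F

/-- Swap Kripke model conditions for C₁ᴰ on a serial frame (W,R):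
¬ is interpreted by ¬̃₁, O by Õ, and the valuations satisfy the DCila
restrictions together with: v_w(α) ∈ {T,F} implies v_w(Oα) ∈ {T,F}. -/
structure IsModelC1D {W : Type} (R : W → W → Prop) (v : W → Form → SV) : Prop where
  serial : ∀ w, ∃ w', R w w'
  and_ : ∀ w α β, (v w (α.and β)).p1 = ((v w α).p1 && (v w β).p1)
  or_ : ∀ w α β, (v w (α.or β)).p1 = ((v w α).p1 || (v w β).p1)
  imp_ : ∀ w α β, (v w (α.imp β)).p1 = (!(v w α).p1 || (v w β).p1)
  neg_ : ∀ w α, (v w α.neg).p1 = (v w α).p2 ∧ (v w α.neg).p2 ≤ (v w α).p1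
  obl_ : ∀ w α, ((v w α.obl).p1 = true ↔ ∀ w', R w w' → (v w' α).p1 = true)
  cl_ : ∀ w α, v w α = SV.t → v w (α.and α.neg) = SV.T
  booAnd : ∀ w α β, (v w α).boo → (v w β).boo → (v w (α.and β)).boo
  booOr : ∀ w α β, (v w α).boo → (v w β).boo → (v w (α.or β)).boo
  booImp : ∀ w α β, (v w α).boo → (v w β).boo → (v w (α.imp β)).boo
  booObl : ∀ w α, (v w α).boo → (v w α.obl).boo

/-- Γ ⊨_{C₁ᴰ} φ : semantic consequence over all swap Kripke models for C₁ᴰ. -/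
def SemC1D (Γ : Set Form) (φ : Form) : Prop :=
  ∀ (W : Type) (R : W → W → Prop) (v : W → Form → SV), Nonempty W →
    IsModelC1D R v → ∀ w : W, (∀ γ ∈ Γ, (v w γ).desig) → (v w φ).desig

/-- Auxiliary derivability-with-context relation. -/
inductive Der (Γ : Set Form) : Form → Prop
  | ax {φ} : ThmC1D φ → Der Γ φ
  | hyp {φ} : φ ∈ Γ → Der Γ φ
  | mp {φ ψ} : Der Γ (φ.imp ψ) → Der Γ φ → Der Γ ψ

lemma Der.mono {Γ Γ' : Set Form} {φ : Form} (h : Γ ⊆ Γ') (hd : Der Γ φ) : Der Γ' φ := by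
  induction hd with
  | ax h' => exact .ax h'
  | hyp h' => exact .hyp (h h')
  | mp _ _ ih1 ih2 => exact .mp ih1 ih2

lemma thm_id (α : Form) : ThmC1D (α.imp α) :=
  ((ThmC1D.A2 α (α.imp α) α).mp (ThmC1D.A1 _ _)).mp (ThmC1D.A1 _ _)

lemma Der.deduction {Γ : Set Form} {α β : Form} (h : Der (insert α Γ) β) :
    Der Γ (α.imp β) := by
  induction h with
  | ax h' => exact .mp (.ax (ThmC1D.A1 _ _)) (.ax h')
  | @hyp φ h' =>
    rcases Set.mem_insert_iff.1 h' with h' | h'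
    · subst h'; exact .ax (thm_id _)
    · exact .mp (.ax (ThmC1D.A1 _ _)) (.hyp h')
  | mp _ _ ih1 ih2 => exact .mp (.mp (.ax (ThmC1D.A2 _ _ _)) ih1) ih2

lemma Der.empty {φ : Form} (h : Der ∅ φ) : ThmC1D φ := by
  induction h with
  | ax h => exact h
  | hyp h => exact absurd h (Set.notMem_empty _)
  | mp _ _ ih1 ih2 => exact ih1.mp ih2

lemma Der.cut {Γ Γ' : Set Form} {φ : Form} (h : ∀ δ ∈ Γ', Der Γ δ) (hd : Der Γ' φ) :
    Der Γ φ := by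
  induction hd with
  | ax h' => exact .ax h'
  | hyp h' => exact h _ h'
  | mp _ _ ih1 ih2 => exact .mp ih1 ih2

lemma Der.compact {Γ : Set Form} {φ : Form} (h : Der Γ φ) :
    ∃ l : List Form, (∀ δ ∈ l, δ ∈ Γ) ∧ Der {δ | δ ∈ l} φ := by
  induction h with
  | @ax φ h => exact ⟨[], by simp, .ax h⟩
  | @hyp φ h => exact ⟨[φ], by simpa, .hyp (by simp)⟩
  | mp _ _ ih1 ih2 =>
    obtain ⟨l1, h1, d1⟩ := ih1
    obtain ⟨l2, h2, d2⟩ := ih2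
    refine ⟨l1 ++ l2, ?_, .mp (d1.mono ?_) (d2.mono ?_)⟩
    · intro δ hδ; rcases List.mem_append.1 hδ with h | h
      · exact h1 _ h
      · exact h2 _ h
    · intro δ hδ; simp only [Set.mem_setOf_eq, List.mem_append] at *; exact Or.inl hδ
    · intro δ hδ; simp only [Set.mem_setOf_eq, List.mem_append] at *; exact Or.inr hδ

lemma conj_proj {γ : Form} {l : List Form} {δ : Form} (h : δ ∈ γ :: l) :
    Der {conj γ l} δ := by
  induction l generalizing γ with
  | nil =>
    simp only [List.mem_cons, List.not_mem_nil, or_false] at h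
    subst h; exact .hyp rfl
  | cons ε l' ih =>
    have hc : Der {conj γ (ε :: l')} (conj γ (ε :: l')) := .hyp rfl
    rcases List.mem_cons.1 h with h | h
    · subst h; exact .mp (.ax (ThmC1D.A4 _ _)) hc
    · have h2 : Der {conj γ (ε :: l')} (conj ε l') := .mp (.ax (ThmC1D.A5 _ _)) hc
      exact Der.cut (by intro x hx; rcases hx with rfl; exact h2) (ih h)

lemma conj_intro {Γ : Set Form} {γ : Form} {l : List Form}
    (h : ∀ δ ∈ γ :: l, Der Γ δ) : Der Γ (conj γ l) := by
  induction l generalizing γ with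
  | nil => exact h γ (by simp)
  | cons ε l' ih =>
    have h1 : Der Γ γ := h γ (by simp)
    have h2 : Der Γ (conj ε l') := ih (by intro δ hδ; apply h; simp at hδ ⊢; tauto)
    exact .mp (.mp (.ax (ThmC1D.A3 _ _)) h1) h2

lemma deriv_iff {Γ : Set Form} {φ : Form} : DerivC1D Γ φ ↔ Der Γ φ := by
  constructor
  · rintro (h | ⟨γ, l, hmem, hthm⟩)
    · exact .ax h
    · exact .mp (.ax hthm) (conj_intro (by intro δ hδ; exact .hyp (hmem δ hδ)))
  · intro h
    obtain ⟨l, hmem, hd⟩ := h.compact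
    cases l with
    | nil =>
      left
      exact Der.empty (hd.mono (by intro x hx; simp at hx))
    | cons γ l' =>
      right
      refine ⟨γ, l', hmem, ?_⟩
      have h1 : Der {conj γ l'} φ :=
        Der.cut (fun δ hδ => conj_proj hδ) hd
      have h2 : Der (∅ : Set Form) ((conj γ l').imp φ) := by
        apply Der.deduction
        exact h1.mono (by intro x hx; rcases hx with rfl; exact Set.mem_insert _ _)
      exact h2.empty
lemma der_peirce {Γ : Set Form} {α β ψ : Form}
    (h1 : Der Γ ((α.imp β).imp ψ)) (h2 : Der Γ (α.imp ψ)) : Der Γ ψ := by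
  have h3 : Der Γ ((ψ.imp β).imp ψ) := by
    apply Der.deduction
    have hpb : Der (insert (ψ.imp β) Γ) (ψ.imp β) := .hyp (Set.mem_insert _ _)
    have h2' : Der (insert (ψ.imp β) Γ) (α.imp ψ) := h2.mono (Set.subset_insert _ _)
    have h1' : Der (insert (ψ.imp β) Γ) ((α.imp β).imp ψ) := h1.mono (Set.subset_insert _ _)
    have hab : Der (insert (ψ.imp β) Γ) (α.imp β) := by
      apply Der.deduction
      have ha : Der (insert α (insert (ψ.imp β) Γ)) α := .hyp (Set.mem_insert _ _)
      exact .mp (hpb.mono (Set.subset_insert _ _)) (.mp (h2'.mono (Set.subset_insert _ _)) ha)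
    exact .mp h1' hab
  exact .mp (.ax (ThmC1D.A9 ψ β)) h3

lemma der_bot_any {Γ : Set Form} {γ χ : Form} (h : Der Γ (Form.bot γ)) : Der Γ χ := by
  have hgn : Der Γ (γ.and γ.neg) := .mp (.ax (ThmC1D.A4 _ _)) h
  have hcons : Der Γ γ.cons := .mp (.ax (ThmC1D.A5 _ _)) h
  have hg : Der Γ γ := .mp (.ax (ThmC1D.A4 _ _)) hgn
  have hng : Der Γ γ.neg := .mp (.ax (ThmC1D.A5 _ _)) hgn
  exact .mp (.mp (.mp (.ax (ThmC1D.bc' γ χ)) hcons) hg) hng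

lemma obl_conj {Γ : Set Form} {γ : Form} {l : List Form}
    (h : ∀ δ ∈ γ :: l, Der Γ δ.obl) : Der Γ (conj γ l).obl := by
  induction l generalizing γ with
  | nil => exact h γ (by simp)
  | cons ε l' ih =>
    have h1 : Der Γ γ.obl := h γ (by simp)
    have h2 : Der Γ (conj ε l').obl := ih (by intro δ hδ; apply h; simp at hδ ⊢; tauto)
    have t1 : ThmC1D (γ.imp ((conj ε l').imp (γ.and (conj ε l')))) := ThmC1D.A3 _ _
    have t2 : ThmC1D (γ.obl.imp ((conj ε l').imp (γ.and (conj ε l'))).obl) :=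
      (ThmC1D.OK _ _).mp t1.nec
    have t3 : Der Γ ((conj ε l').imp (γ.and (conj ε l'))).obl := .mp (.ax t2) h1
    exact .mp (.mp (.ax (ThmC1D.OK _ _)) t3) h2

lemma lindenbaum {Γ : Set Form} {ψ : Form} (h : ¬ Der Γ ψ) :
    ∃ Δ, Γ ⊆ Δ ∧ ¬ Der Δ ψ ∧ ∀ α ∉ Δ, Der (insert α Δ) ψ := by
  have hzorn : ∀ c ⊆ {Δ : Set Form | ¬ Der Δ ψ}, IsChain (fun x1 x2 => x1 ⊆ x2) c →
      c.Nonempty → ∃ ub ∈ {Δ : Set Form | ¬ Der Δ ψ}, ∀ s ∈ c, s ⊆ ub := by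
    intro c hcS hchain hcne
    refine ⟨⋃₀ c, ?_, fun s hs => Set.subset_sUnion_of_mem hs⟩
    simp only [Set.mem_setOf_eq]
    intro hder
    obtain ⟨l, hmem, hd⟩ := hder.compact
    have key : ∀ l' : List Form, (∀ δ ∈ l', δ ∈ ⋃₀ c) → ∃ t ∈ c, ∀ δ ∈ l', δ ∈ t := by
      intro l'
      induction l' with
      | nil => intro _; obtain ⟨t, ht⟩ := hcne; exact ⟨t, ht, by simp⟩
      | cons δ l'' ih =>
        intro hm
        obtain ⟨t1, ht1c, ht1⟩ := hm δ (by simp)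
        obtain ⟨t2, ht2c, ht2⟩ := ih (fun x hx => hm x (by simp [hx]))
        rcases hchain.total ht1c ht2c with hle | hle
        · refine ⟨t2, ht2c, fun x hx => ?_⟩
          rcases List.mem_cons.1 hx with rfl | hx
          · exact hle ht1
          · exact ht2 x hx
        · refine ⟨t1, ht1c, fun x hx => ?_⟩
          rcases List.mem_cons.1 hx with rfl | hx
          · exact ht1
          · exact hle (ht2 x hx)
    obtain ⟨t, htc, ht⟩ := key l hmem
    exact (hcS htc) (Der.cut (fun δ hδ => .hyp (ht δ hδ)) hd)
  obtain ⟨Δ, hsub, hmax⟩ := zorn_subset_nonempty {Δ : Set Form | ¬ Der Δ ψ} hzorn Γ h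
  refine ⟨Δ, hsub, hmax.1, ?_⟩
  intro α hα
  by_contra hnd
  have heq : insert α Δ = Δ := by
    have := hmax.2 (y := insert α Δ) hnd (Set.subset_insert _ _)
    exact le_antisymm this (Set.subset_insert _ _)
  exact hα (heq ▸ Set.mem_insert α Δ)

/-- Worlds of the canonical model: pairs (Δ, ψ) with Δ maximally non-trivial w.r.t. ψ. -/
structure Wld where
  Δ : Set Form
  ψ : Form
  nd : ¬ Der Δ ψ
  max : ∀ α ∉ Δ, Der (insert α Δ) ψ

namespace Wld

lemma mem_of_der {w : Wld} {χ : Form} (h : Der w.Δ χ) : χ ∈ w.Δ := by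
  by_contra hχ
  exact w.nd (.mp (Der.deduction (w.max χ hχ)) h)

lemma thm_mem {w : Wld} {χ : Form} (h : ThmC1D χ) : χ ∈ w.Δ := mem_of_der (.ax h)

lemma or_elim {w : Wld} {α β : Form} (h : α.or β ∈ w.Δ) (ha : α ∉ w.Δ) (hb : β ∉ w.Δ) :
    False := by
  have h1 : Der w.Δ (α.imp w.ψ) := Der.deduction (w.max α ha)
  have h2 : Der w.Δ (β.imp w.ψ) := Der.deduction (w.max β hb)
  exact w.nd (.mp (.mp (.mp (.ax (ThmC1D.A8 α β w.ψ)) h1) h2) (.hyp h))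

lemma em (w : Wld) (α : Form) : α ∈ w.Δ ∨ α.neg ∈ w.Δ := by
  by_contra hc
  push_neg at hc
  exact or_elim (thm_mem (ThmC1D.EM α)) hc.1 hc.2

lemma and_mem_iff {w : Wld} {α β : Form} : α.and β ∈ w.Δ ↔ α ∈ w.Δ ∧ β ∈ w.Δ := by
  constructor
  · intro h
    exact ⟨mem_of_der (.mp (.ax (ThmC1D.A4 _ _)) (.hyp h)),
           mem_of_der (.mp (.ax (ThmC1D.A5 _ _)) (.hyp h))⟩
  · rintro ⟨h1, h2⟩
    exact mem_of_der (.mp (.mp (.ax (ThmC1D.A3 _ _)) (.hyp h1)) (.hyp h2))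

lemma or_mem_iff {w : Wld} {α β : Form} : α.or β ∈ w.Δ ↔ α ∈ w.Δ ∨ β ∈ w.Δ := by
  constructor
  · intro h; by_contra hc; push_neg at hc; exact or_elim h hc.1 hc.2
  · rintro (h | h)
    · exact mem_of_der (.mp (.ax (ThmC1D.A6 _ _)) (.hyp h))
    · exact mem_of_der (.mp (.ax (ThmC1D.A7 _ _)) (.hyp h))

lemma imp_mem_iff {w : Wld} {α β : Form} : α.imp β ∈ w.Δ ↔ (α ∉ w.Δ ∨ β ∈ w.Δ) := by
  constructor
  · intro h
    by_cases ha : α ∈ w.Δ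
    · exact Or.inr (mem_of_der (.mp (.hyp h) (.hyp ha)))
    · exact Or.inl ha
  · rintro (h | h)
    · by_contra hi
      have h1 : Der w.Δ ((α.imp β).imp w.ψ) := Der.deduction (w.max _ hi)
      have h2 : Der w.Δ (α.imp w.ψ) := Der.deduction (w.max _ h)
      exact w.nd (der_peirce h1 h2)
    · exact mem_of_der (.mp (.ax (ThmC1D.A1 _ _)) (.hyp h))

lemma negneg {w : Wld} {α : Form} (h : α.neg.neg ∈ w.Δ) : α ∈ w.Δ :=
  mem_of_der (.mp (.ax (ThmC1D.cf _)) (.hyp h))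

lemma expl {w : Wld} {α : Form} (h1 : α ∈ w.Δ) (h2 : α.neg ∈ w.Δ) (h3 : α.cons ∈ w.Δ) :
    False :=
  w.nd (.mp (.mp (.mp (.ax (ThmC1D.bc' α w.ψ)) (.hyp h3)) (.hyp h1)) (.hyp h2))

lemma cons_mem {w : Wld} {α : Form} (h : ¬ (α ∈ w.Δ ∧ α.neg ∈ w.Δ)) : α.cons ∈ w.Δ := by
  rcases em w (α.and α.neg) with h' | h'
  · exact absurd (and_mem_iff.1 h') h
  · exact h'

end Wld
/-- Canonical accessibility relation. -/
def CanRel (w w' : Wld) : Prop := ∀ β : Form, β.obl ∈ w.Δ → β ∈ w'.Δ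

open Classical in
/-- Canonical valuation. -/
noncomputable def val (w : Wld) (α : Form) : SV :=
  if α ∈ w.Δ then (if α.neg ∈ w.Δ then SV.t else SV.T) else SV.F

lemma bool_eq {a b : Bool} (h : a = true ↔ b = true) : a = b := by
  cases a <;> cases b <;> simp_all

lemma val_p1 {w : Wld} {α : Form} : (val w α).p1 = true ↔ α ∈ w.Δ := by
  unfold val; split_ifs with h1 h2 <;> simp [SV.p1, h1, *]

lemma val_p2 {w : Wld} {α : Form} : (val w α).p2 = true ↔ α.neg ∈ w.Δ := by
  unfold val; split_ifs with h1 h2 <;> simp [SV.p2, *]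
  exact (w.em α).resolve_left h1

lemma val_eq_t_iff {w : Wld} {α : Form} : val w α = SV.t ↔ α ∈ w.Δ ∧ α.neg ∈ w.Δ := by
  unfold val; split_ifs with h1 h2 <;> simp [*]

lemma val_eq_T_iff {w : Wld} {α : Form} : val w α = SV.T ↔ α ∈ w.Δ ∧ α.neg ∉ w.Δ := by
  unfold val; split_ifs with h1 h2 <;> simp [*]

lemma val_eq_F_iff {w : Wld} {α : Form} : val w α = SV.F ↔ α ∉ w.Δ := by
  unfold val; split_ifs with h1 h2 <;> simp [*]

lemma val_boo_iff {w : Wld} {α : Form} :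
    (val w α).boo ↔ ¬ (α ∈ w.Δ ∧ α.neg ∈ w.Δ) := by
  unfold SV.boo
  rw [val_eq_T_iff, val_eq_F_iff]
  tauto

lemma ob_der {w : Wld} {α : Form} (h : Der {β | β.obl ∈ w.Δ} α) : Der w.Δ α.obl := by
  obtain ⟨l, hmem, hd⟩ := h.compact
  cases l with
  | nil =>
    exact .ax (Der.empty (hd.mono (by intro x hx; simp at hx))).nec
  | cons γ l' =>
    have h1 : Der {conj γ l'} α := Der.cut (fun δ hδ => conj_proj hδ) hd
    have h2 : ThmC1D ((conj γ l').imp α) := by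
      apply Der.empty
      apply Der.deduction
      exact h1.mono (by intro x hx; rcases hx with rfl; exact Set.mem_insert _ _)
    have h3 : ThmC1D ((conj γ l').obl.imp α.obl) := (ThmC1D.OK _ _).mp h2.nec
    have h4 : Der w.Δ (conj γ l').obl := obl_conj (fun δ hδ => .hyp (hmem δ hδ))
    exact .mp (.ax h3) h4

lemma rel_exists {w : Wld} {α : Form} (h : ¬ Der {β | β.obl ∈ w.Δ} α) :
    ∃ w' : Wld, CanRel w w' ∧ α ∉ w'.Δ := by
  obtain ⟨Δ', hsub, hnd, hmax⟩ := lindenbaum h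
  refine ⟨⟨Δ', α, hnd, hmax⟩, fun β hβ => hsub hβ, fun hα => hnd (.hyp hα)⟩

lemma serial_der (w : Wld) : ¬ Der {β | β.obl ∈ w.Δ} (Form.bot (Form.var 0)) := by
  intro hD
  have h1 : Der w.Δ (Form.bot (Form.var 0)).obl := ob_der hD
  have h2 : Der w.Δ (Form.bot (Form.var 0)) := .mp (.ax (ThmC1D.OE _)) h1
  exact w.nd (der_bot_any h2)

lemma canonical_model : IsModelC1D CanRel val := by
  constructor
  · -- serial
    intro w
    obtain ⟨w', hrel, _⟩ := rel_exists (serial_der w)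
    exact ⟨w', hrel⟩
  · -- and
    intro w α β
    apply bool_eq
    simp [val_p1, Bool.and_eq_true, Wld.and_mem_iff]
  · -- or
    intro w α β
    apply bool_eq
    simp [val_p1, Bool.or_eq_true, Wld.or_mem_iff]
  · -- imp
    intro w α β
    apply bool_eq
    rw [Bool.or_eq_true, Bool.not_eq_true', val_p1, Wld.imp_mem_iff]
    have h1 : (val w α).p1 = false ↔ α ∉ w.Δ := by rw [← Bool.not_eq_true, val_p1]
    rw [h1, val_p1]
  · -- neg
    intro w α
    constructor
    · apply bool_eq; rw [val_p1, val_p2]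
    · rw [Bool.le_iff_imp, val_p2, val_p1]
      exact Wld.negneg
  · -- obl
    intro w α
    rw [val_p1]
    constructor
    · intro h w' hrel
      exact val_p1.2 (hrel α h)
    · intro hall
      by_contra hO
      have hnd : ¬ Der {β | β.obl ∈ w.Δ} α := fun hD => hO (Wld.mem_of_der (ob_der hD))
      obtain ⟨w', hrel, hα⟩ := rel_exists hnd
      exact hα (val_p1.1 (hall w' hrel))
  · -- cl
    intro w α h
    obtain ⟨h1, h2⟩ := val_eq_t_iff.1 h
    rw [val_eq_T_iff]
    refine ⟨Wld.and_mem_iff.2 ⟨h1, h2⟩, fun hc => ?_⟩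
    exact Wld.expl h1 h2 hc
  · -- booAnd
    intro w α β ha hb
    have hca : α.cons ∈ w.Δ := Wld.cons_mem (val_boo_iff.1 ha)
    have hcb : β.cons ∈ w.Δ := Wld.cons_mem (val_boo_iff.1 hb)
    have hc : (α.and β).cons ∈ w.Δ :=
      Wld.mem_of_der (.mp (.ax (ThmC1D.caAnd' _ _)) (.hyp (Wld.and_mem_iff.2 ⟨hca, hcb⟩)))
    exact val_boo_iff.2 (fun ⟨h1, h2⟩ => Wld.expl h1 h2 hc)
  · -- booOr
    intro w α β ha hb
    have hca : α.cons ∈ w.Δ := Wld.cons_mem (val_boo_iff.1 ha)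
    have hcb : β.cons ∈ w.Δ := Wld.cons_mem (val_boo_iff.1 hb)
    have hc : (α.or β).cons ∈ w.Δ :=
      Wld.mem_of_der (.mp (.ax (ThmC1D.caOr' _ _)) (.hyp (Wld.and_mem_iff.2 ⟨hca, hcb⟩)))
    exact val_boo_iff.2 (fun ⟨h1, h2⟩ => Wld.expl h1 h2 hc)
  · -- booImp
    intro w α β ha hb
    have hca : α.cons ∈ w.Δ := Wld.cons_mem (val_boo_iff.1 ha)
    have hcb : β.cons ∈ w.Δ := Wld.cons_mem (val_boo_iff.1 hb)
    have hc : (α.imp β).cons ∈ w.Δ :=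
      Wld.mem_of_der (.mp (.ax (ThmC1D.caImp' _ _)) (.hyp (Wld.and_mem_iff.2 ⟨hca, hcb⟩)))
    exact val_boo_iff.2 (fun ⟨h1, h2⟩ => Wld.expl h1 h2 hc)
  · -- booObl
    intro w α ha
    have hca : α.cons ∈ w.Δ := Wld.cons_mem (val_boo_iff.1 ha)
    have hc : α.obl.cons ∈ w.Δ :=
      Wld.mem_of_der (.mp (.ax (ThmC1D.caO' _)) (.hyp hca))
    exact val_boo_iff.2 (fun ⟨h1, h2⟩ => Wld.expl h1 h2 hc)

/-- Completeness of C₁ᴰ w.r.t. swap Kripke models. -/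
theorem C1D_completeness (Γ : Set Form) (φ : Form) :
    SemC1D Γ φ → DerivC1D Γ φ := by
  intro hsem
  rw [deriv_iff]
  by_contra hnd
  obtain ⟨Δ, hsub, hnd', hmax⟩ := lindenbaum hnd
  set w0 : Wld := ⟨Δ, φ, hnd', hmax⟩ with hw0
  have hdes : (val w0 φ).desig := by
    apply hsem Wld CanRel val ⟨w0⟩ canonical_model w0
    intro γ hγ
    exact val_p1.2 (hsub hγ)
  exact hnd' (.hyp (val_p1.1 hdes))
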